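/- Let n be an odd number, d invertible in Z/nZ, and consider the orbit a_{i,j} (i ≥ 0, j ∈ Z) of the universal sequence S = IAP((0,-d,d),(d,-2d,d)) in Z/nZ under the rule a_{i+1,j} = a_{i,j} + a_{i,j+1}. Then for all non-negative integers i and j: a_{i,j} = (-1)^i · Σ_{k>0} binom(k, j+2i-k) · (-1)^k · (k-i) · d. -/

import Mathlib

def IAP3 {G : Type*} [AddCommGroup G] (a0 a1 a2 d0 d1 d2 : G) : ℤ → G :=
  fun j => if j % 3 = 0 then a0 + (j / 3) • d0
    else if j % 3 = 1 then a1 + (j / 3) • d1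
    else a2 + (j / 3) • d2

def orbit {G : Type*} [AddCommGroup G] (S : ℤ → G) : ℕ → ℤ → G
  | 0 => S
  | i+1 => fun j => orbit S i j + orbit S i (j+1)

namespace Stmt13Aux
open Finset

def cc (m k : ℕ) : ℤ := if k ≤ m then (k.choose (m - k) : ℤ) else 0

lemma cc_of_gt {m k : ℕ} (h : m < k) : cc m k = 0 := by
  rw [cc, if_neg (by omega)]

lemma cc_pascal (m k : ℕ) : cc (m+2) (k+1) = cc (m+1) k + cc m k := by
  unfold cc
  rcases le_or_gt k m with h | h
  · rw [if_pos (by omega : k + 1 ≤ m + 2), if_pos (by omega : k ≤ m + 1), if_pos h,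
      show m + 2 - (k+1) = (m - k) + 1 by omega, show m + 1 - k = (m - k) + 1 by omega,
      Nat.choose_succ_succ]
    push_cast; ring
  · rcases eq_or_lt_of_le (Nat.succ_le_of_lt h) with h' | h'
    · rw [if_pos (by omega : k + 1 ≤ m + 2), if_pos (by omega : k ≤ m + 1), if_neg (by omega),
        show m + 2 - (k+1) = 0 by omega, show m + 1 - k = 0 by omega]
      simp
    · rw [if_neg (by omega), if_neg (by omega), if_neg (by omega)]; ring

def P (i : ℤ) (m : ℕ) : ℤ := ∑ k ∈ range (m+1), cc m k * (-1)^k * (k - i)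

lemma P_ext (i : ℤ) (m N : ℕ) (h : m + 1 ≤ N) :
    ∑ k ∈ range N, cc m k * (-1)^k * (k - i) = P i m := by
  rw [P]
  refine (Finset.sum_subset (Finset.range_subset_range.mpr h) ?_).symm
  intro x _ hx
  have : m < x := by simpa using hx
  rw [cc_of_gt this]; ring

lemma P_rec (i : ℤ) (m : ℕ) : P i (m+2) = -(P (i-1) (m+1) + P (i-1) m) := by
  rw [P, Finset.sum_range_succ']
  have h0 : cc (m+2) 0 = 0 := by
    rw [cc, if_pos (by omega)]
    simp [Nat.choose_eq_zero_of_lt]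
  have hterm : ∀ k ∈ range (m+2),
      cc (m+2) (k+1) * (-1)^(k+1) * ((k+1 : ℕ) - i)
        = -(cc (m+1) k * (-1)^k * (k - (i-1))) + -(cc m k * (-1)^k * (k - (i-1))) := by
    intro k _
    rw [cc_pascal]
    push_cast; ring
  rw [Finset.sum_congr rfl hterm, h0, Finset.sum_add_distrib,
    Finset.sum_neg_distrib, Finset.sum_neg_distrib,
    P_ext (i-1) (m+1) (m+2) (by omega), P_ext (i-1) m (m+2) (by omega)]
  push_cast; ring

def F (m : ℕ) : ℤ := P 0 m - P 1 m

lemma P_neg_one (m : ℕ) : P (-1) m = P 0 m + F m := by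
  rw [F, P, P, P]
  rw [← Finset.sum_sub_distrib, ← Finset.sum_add_distrib]
  exact Finset.sum_congr rfl fun k _ => by ring

lemma F_rec (m : ℕ) : F (m+2) = -(F (m+1) + F m) := by
  have h0 := P_rec 0 m
  have h1 := P_rec 1 m
  rw [show (0:ℤ)-1 = -1 by ring, P_neg_one, P_neg_one] at h0
  rw [show (1:ℤ)-1 = 0 by ring] at h1
  rw [F, h0, h1, F, F]; ring

lemma g_rec (m : ℕ) : P 0 (m+2) = -(P 0 (m+1) + F (m+1) + P 0 m + F m) := by
  have h0 := P_rec 0 m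
  rw [show (0:ℤ)-1 = -1 by ring, P_neg_one, P_neg_one] at h0
  rw [h0]; ring

lemma closed (t : ℕ) : F (3*t) = 1 ∧ F (3*t+1) = -1 ∧ F (3*t+2) = 0 ∧
    P 0 (3*t) = t ∧ P 0 (3*t+1) = -(2*(t:ℤ)+1) ∧ P 0 (3*t+2) = t+1 := by
  induction t with
  | zero =>
    refine ⟨?_, ?_, ?_, ?_, ?_, ?_⟩ <;> decide
  | succ t ih =>
    obtain ⟨f0, f1, f2, g0, g1, g2⟩ := ih
    have F3 : F (3*t+3) = 1 := by
      have := F_rec (3*t+1); rw [show 3*t+1+2 = 3*t+3 by ring] at this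
      rw [this, f1, f2]; ring
    have F4 : F (3*t+4) = -1 := by
      have := F_rec (3*t+2); rw [show 3*t+2+2 = 3*t+4 by ring] at this
      rw [this, f2, F3]; ring
    have F5 : F (3*t+5) = 0 := by
      have := F_rec (3*t+3); rw [show 3*t+3+2 = 3*t+5 by ring] at this
      rw [this, F3, F4]; ring
    have G3 : P 0 (3*t+3) = (t:ℤ)+1 := by
      have := g_rec (3*t+1); rw [show 3*t+1+2 = 3*t+3 by ring] at this
      rw [this, g1, g2, f1, f2]; ring
    have G4 : P 0 (3*t+4) = -(2*((t:ℤ)+1)+1) := by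
      have := g_rec (3*t+2); rw [show 3*t+2+2 = 3*t+4 by ring] at this
      rw [this, g2, G3, f2, F3]; ring
    have G5 : P 0 (3*t+5) = (t:ℤ)+2 := by
      have := g_rec (3*t+3); rw [show 3*t+3+2 = 3*t+5 by ring] at this
      rw [this, G3, G4, F3, F4]; ring
    refine ⟨?_, ?_, ?_, ?_, ?_, ?_⟩
    · rw [show 3*(t+1) = 3*t+3 by ring]; exact F3
    · rw [show 3*(t+1)+1 = 3*t+4 by ring]; exact F4
    · rw [show 3*(t+1)+2 = 3*t+5 by ring]; exact F5
    · rw [show 3*(t+1) = 3*t+3 by ring, G3]; push_cast; ring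
    · rw [show 3*(t+1)+1 = 3*t+4 by ring, G4]; push_cast; ring
    · rw [show 3*(t+1)+2 = 3*t+5 by ring, G5]; push_cast; ring

lemma S_eq (n : ℕ) (d : ZMod n) (j : ℕ) :
    IAP3 (0 : ZMod n) (-d) d d (-(2*d)) d (j : ℤ) = ((P 0 j : ℤ) : ZMod n) * d := by
  obtain ⟨t, r, hr, rfl⟩ : ∃ t r, r < 3 ∧ j = 3*t + r :=
    ⟨j/3, j % 3, Nat.mod_lt _ (by norm_num), by omega⟩
  interval_cases r
  · have h1 : ((3*t + 0 : ℕ) : ℤ) % 3 = 0 := by push_cast; omega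
    have h2 : ((3*t + 0 : ℕ) : ℤ) / 3 = t := by push_cast; omega
    rw [IAP3]
    simp only [h1, h2, if_pos, zero_add, zsmul_eq_mul]
    rw [show 3*t+0 = 3*t by ring, (closed t).2.2.2.1]
  · have h1 : ((3*t + 1 : ℕ) : ℤ) % 3 = 1 := by push_cast; omega
    have h2 : ((3*t + 1 : ℕ) : ℤ) / 3 = t := by push_cast; omega
    rw [IAP3]
    simp only [h1, h2, zsmul_eq_mul]
    norm_num
    rw [(closed t).2.2.2.2.1]
    push_cast; ring
  · have h1 : ((3*t + 2 : ℕ) : ℤ) % 3 = 2 := by push_cast; omega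
    have h2 : ((3*t + 2 : ℕ) : ℤ) / 3 = t := by push_cast; omega
    rw [IAP3]
    simp only [h1, h2, zsmul_eq_mul]
    norm_num
    rw [(closed t).2.2.2.2.2]
    push_cast; ring

lemma orbit_eq (n : ℕ) (d : ZMod n) : ∀ (i j : ℕ),
    orbit (IAP3 (0:ZMod n) (-d) d d (-(2*d)) d) i (j:ℤ)
      = (-1:ZMod n)^i * ((P (i:ℤ) (j + 2*i) : ℤ) : ZMod n) * d := by
  intro i
  induction i with
  | zero => intro j; simpa [orbit] using S_eq n d j
  | succ i ih =>
    intro j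
    have h1 := ih j
    have h2 := ih (j+1)
    have hrec : P ((i:ℤ)+1) (j+2*i+2) = -(P i (j+2*i+1) + P i (j+2*i)) := by
      simpa using P_rec ((i:ℤ)+1) (j + 2*i)
    have hj : ((j:ℤ) + 1) = ((j+1 : ℕ) : ℤ) := by push_cast; ring
    rw [show (orbit (IAP3 (0:ZMod n) (-d) d d (-(2*d)) d) (i+1) (j:ℤ))
        = orbit (IAP3 (0:ZMod n) (-d) d d (-(2*d)) d) i (j:ℤ)
          + orbit (IAP3 (0:ZMod n) (-d) d d (-(2*d)) d) i ((j:ℤ)+1) from rfl,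
      hj, h1, h2,
      show j + 2*(i+1) = j + 2*i + 2 by ring,
      show j + 1 + 2*i = j + 2*i + 1 by ring,
      show ((i+1 : ℕ) : ℤ) = (i:ℤ)+1 by push_cast; ring,
      hrec]
    push_cast
    ring

end Stmt13Aux

open Stmt13Aux Finset in
theorem stmt13 (n : ℕ) (hn : Odd n) (d : ZMod n) (hd : IsUnit d) :
    ∀ (i j : ℕ), orbit (IAP3 (0 : ZMod n) (-d) d d (-(2 * d)) d) i (j : ℤ) =
      (-1 : ZMod n) ^ i * ∑ k ∈ Finset.Icc 1 (j + 2 * i),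
        (k.choose (j + 2 * i - k) : ZMod n) * (-1 : ZMod n) ^ k *
          (((k : ℤ) - (i : ℤ)) : ZMod n) * d := by
  intro i j
  rw [orbit_eq n d i j]
  set m := j + 2*i with hm
  have hins : range (m+1) = insert 0 (Finset.Icc 1 m) := by
    ext x; simp; omega
  have h0 : cc m 0 * (-1:ℤ)^0 * ((0:ℕ) - (i:ℤ)) = 0 := by
    rcases Nat.eq_zero_or_pos m with h | h
    · have : i = 0 := by omega
      simp [this]
    · rw [cc, if_pos (by omega)]
      rw [Nat.choose_eq_zero_of_lt (by omega)]
      simp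
  rw [P, hins, Finset.sum_insert (by simp), h0, zero_add]
  rw [Int.cast_sum, Finset.mul_sum, Finset.mul_sum, Finset.sum_mul]
  apply Finset.sum_congr rfl
  intro k hk
  have hk' : 1 ≤ k ∧ k ≤ m := by simpa using hk
  rw [cc, if_pos hk'.2]
  push_cast
  ring
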